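/- Let q ∈ (0,2) with q ≠ 1, let ρ and σ be positive definite 2×2 density matrices, let λ_ρ be the largest eigenvalue of ρ and α_σ the smallest eigenvalue of σ, and assume α_σ < λ_ρ. Then the Tsallis relative q-entropy satisfies S_q(ρ‖σ) ≤ (1/(1−q)) · ‖ρ−σ‖₁ · λ_ρ^q · (λ_ρ^{1−q} − α_σ^{1−q})/(λ_ρ − α_σ) ≤ ‖ρ−σ‖₁ · λ_ρ^q / α_σ^q. -/

import Mathlib

open Matrix ComplexOrder

/-- The trace norm of a complex matrix: the sum of its singular values,
realized as `Tr √(Aᴴ A)`. -/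
noncomputable def traceNorm {d : ℕ} (A : Matrix (Fin d) (Fin d) ℂ) : ℝ :=
  (((Matrix.posSemidef_conjTranspose_mul_self A).1.eigenvectorUnitary : Matrix (Fin d) (Fin d) ℂ) *
      Matrix.diagonal (((↑) : ℝ → ℂ) ∘ (Real.sqrt ·) ∘ (Matrix.posSemidef_conjTranspose_mul_self A).1.eigenvalues) *
      (star (Matrix.posSemidef_conjTranspose_mul_self A).1.eigenvectorUnitary :
        Matrix (Fin d) (Fin d) ℂ)).trace.re

/-- Functional calculus for a Hermitian matrix: apply `f` to the eigenvalues in an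
orthonormal eigenbasis. -/
noncomputable def matFun {d : ℕ} {A : Matrix (Fin d) (Fin d) ℂ} (hA : A.IsHermitian)
    (f : ℝ → ℝ) : Matrix (Fin d) (Fin d) ℂ :=
  (hA.eigenvectorUnitary : Matrix (Fin d) (Fin d) ℂ) *
    Matrix.diagonal (fun i => (f (hA.eigenvalues i) : ℂ)) *
    (star hA.eigenvectorUnitary : Matrix (Fin d) (Fin d) ℂ)

/-- `f : (0,∞) → ℝ` is operator monotone decreasing: for all positive definite matrices
`A ≤ B` (Loewner order) of any size, `f(B) ≤ f(A)`. -/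
def OpMonoDecrOn (f : ℝ → ℝ) : Prop :=
  ∀ (n : ℕ) (A B : Matrix (Fin n) (Fin n) ℂ) (hA : A.PosDef) (hB : B.PosDef),
    (B - A).PosSemidef → (matFun hA.1 f - matFun hB.1 f).PosSemidef

/-- The quasi-relative entropy `S_f(ρ‖σ) = Σ_{j,k} λ_j f(μ_k/λ_j) |⟨φ_k|ψ_j⟩|²` computed from
spectral decompositions `ρ = Σ_j λ_j |ψ_j⟩⟨ψ_j|`, `σ = Σ_k μ_k |φ_k⟩⟨φ_k|`. -/
noncomputable def quasiRelEntropy {d : ℕ} (f : ℝ → ℝ) {ρ σ : Matrix (Fin d) (Fin d) ℂ}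
    (hρ : ρ.IsHermitian) (hσ : σ.IsHermitian) : ℝ :=
  ∑ j, ∑ k, hρ.eigenvalues j * f (hσ.eigenvalues k / hρ.eigenvalues j) *
    ‖(inner ℂ (hσ.eigenvectorBasis k) (hρ.eigenvectorBasis j) : ℂ)‖ ^ 2

/-- The Umegaki relative entropy `S(ρ‖σ) = Tr(ρ (log ρ − log σ))`. -/
noncomputable def relEntropy {d : ℕ} {ρ σ : Matrix (Fin d) (Fin d) ℂ}
    (hρ : ρ.IsHermitian) (hσ : σ.IsHermitian) : ℝ :=
  ((ρ * (matFun hρ Real.log - matFun hσ Real.log)).trace).re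

/-- The Tsallis relative q-entropy `S_q(ρ‖σ) = (1/(1−q))(1 − Tr(ρ^q σ^{1−q}))`. -/
noncomputable def tsallisEntropy {d : ℕ} (q : ℝ) {ρ σ : Matrix (Fin d) (Fin d) ℂ}
    (hρ : ρ.IsHermitian) (hσ : σ.IsHermitian) : ℝ :=
  (1 / (1 - q)) *
    (1 - ((matFun hρ (fun x => x ^ q) * matFun hσ (fun x => x ^ (1 - q))).trace).re)

/-! ### Auxiliary matrix lemmas -/

lemma star_mul_self_eigU {d : ℕ} {A : Matrix (Fin d) (Fin d) ℂ} (hA : A.IsHermitian) :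
    (star hA.eigenvectorUnitary : Matrix (Fin d) (Fin d) ℂ) *
      (hA.eigenvectorUnitary : Matrix (Fin d) (Fin d) ℂ) = 1 :=
  Matrix.mem_unitaryGroup_iff'.mp hA.eigenvectorUnitary.2

lemma matFun_id {d : ℕ} {A : Matrix (Fin d) (Fin d) ℂ} (hA : A.IsHermitian) :
    matFun hA (fun x => x) = A := by
  have h := hA.spectral_theorem; rw [Unitary.conjStarAlgAut_apply] at h; rw [matFun]; exact h.symm

lemma mul_sandwich {d : ℕ} (U : Matrix (Fin d) (Fin d) ℂ) (hU : star U * U = 1)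
    (D E : Matrix (Fin d) (Fin d) ℂ) :
    (U * D * star U) * (U * E * star U) = U * (D * E) * star U := by
  have h : star U * (U * E * star U) = E * star U := by
    rw [← mul_assoc, ← mul_assoc, hU, one_mul]
  rw [mul_assoc (U * D), h]
  simp only [mul_assoc]

lemma matFun_mul {d : ℕ} {A : Matrix (Fin d) (Fin d) ℂ} (hA : A.IsHermitian) (f g : ℝ → ℝ) :
    matFun hA f * matFun hA g = matFun hA (fun x => f x * g x) := by
  rw [matFun, matFun, matFun, mul_sandwich _ (star_mul_self_eigU hA), diagonal_mul_diagonal]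
  congr 2
  ext i; push_cast; ring

lemma trace_matFun {d : ℕ} {A : Matrix (Fin d) (Fin d) ℂ} (hA : A.IsHermitian) (f : ℝ → ℝ) :
    (matFun hA f).trace = ((∑ i, f (hA.eigenvalues i) : ℝ) : ℂ) := by
  rw [matFun, Matrix.trace_mul_cycle]
  rw [star_mul_self_eigU hA, one_mul, Matrix.trace_diagonal]
  push_cast
  rfl

/-- overlap matrix between two eigenbases -/
noncomputable def ovl {d : ℕ} {A B : Matrix (Fin d) (Fin d) ℂ} (hA : A.IsHermitian)
    (hB : B.IsHermitian) : Matrix (Fin d) (Fin d) ℂ :=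
  (star hA.eigenvectorUnitary : Matrix (Fin d) (Fin d) ℂ) *
    (hB.eigenvectorUnitary : Matrix (Fin d) (Fin d) ℂ)

lemma ovl_mul_star {d : ℕ} {A B : Matrix (Fin d) (Fin d) ℂ} (hA : A.IsHermitian)
    (hB : B.IsHermitian) : ovl hA hB * star (ovl hA hB) = 1 := by
  have : ovl hA hB ∈ Matrix.unitaryGroup (Fin d) ℂ :=
    mul_mem (Unitary.star_mem hA.eigenvectorUnitary.2) hB.eigenvectorUnitary.2
  exact Matrix.mem_unitaryGroup_iff.mp this

lemma star_mul_ovl {d : ℕ} {A B : Matrix (Fin d) (Fin d) ℂ} (hA : A.IsHermitian)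
    (hB : B.IsHermitian) : star (ovl hA hB) * ovl hA hB = 1 := by
  have : ovl hA hB ∈ Matrix.unitaryGroup (Fin d) ℂ :=
    mul_mem (Unitary.star_mem hA.eigenvectorUnitary.2) hB.eigenvectorUnitary.2
  exact Matrix.mem_unitaryGroup_iff'.mp this

lemma ovl_row_sum {d : ℕ} {A B : Matrix (Fin d) (Fin d) ℂ} (hA : A.IsHermitian)
    (hB : B.IsHermitian) (j : Fin d) : ∑ k, ‖ovl hA hB j k‖ ^ 2 = 1 := by
  have h := congrFun (congrFun (ovl_mul_star hA hB) j) j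
  rw [Matrix.mul_apply] at h
  have : ∀ k, ovl hA hB j k * star (ovl hA hB) k j = ((‖ovl hA hB j k‖ ^ 2 : ℝ) : ℂ) := by
    intro k
    rw [Matrix.star_apply]
    simp [Complex.star_def, Complex.mul_conj, Complex.normSq_eq_norm_sq]
  rw [Finset.sum_congr rfl (fun k _ => this k)] at h
  rw [Matrix.one_apply_eq] at h
  exact_mod_cast (by push_cast at h ⊢; exact_mod_cast h : ((∑ k, ‖ovl hA hB j k‖ ^ 2 : ℝ) : ℂ) = 1)

lemma ovl_col_sum {d : ℕ} {A B : Matrix (Fin d) (Fin d) ℂ} (hA : A.IsHermitian)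
    (hB : B.IsHermitian) (k : Fin d) : ∑ j, ‖ovl hA hB j k‖ ^ 2 = 1 := by
  have h := congrFun (congrFun (star_mul_ovl hA hB) k) k
  rw [Matrix.mul_apply] at h
  have : ∀ j, star (ovl hA hB) k j * ovl hA hB j k = ((‖ovl hA hB j k‖ ^ 2 : ℝ) : ℂ) := by
    intro j
    rw [Matrix.star_apply, mul_comm]
    simp [Complex.star_def, Complex.mul_conj, Complex.normSq_eq_norm_sq]
  rw [Finset.sum_congr rfl (fun j _ => this j)] at h
  rw [Matrix.one_apply_eq] at h
  exact_mod_cast (by push_cast at h ⊢; exact_mod_cast h : ((∑ j, ‖ovl hA hB j k‖ ^ 2 : ℝ) : ℂ) = 1)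

lemma trace_matFun_mul {d : ℕ} {A B : Matrix (Fin d) (Fin d) ℂ} (hA : A.IsHermitian)
    (hB : B.IsHermitian) (f g : ℝ → ℝ) :
    (matFun hA f * matFun hB g).trace =
      ((∑ j, ∑ k, f (hA.eigenvalues j) * g (hB.eigenvalues k) * ‖ovl hA hB j k‖ ^ 2 : ℝ) : ℂ) := by
  set U : Matrix (Fin d) (Fin d) ℂ := (hA.eigenvectorUnitary : Matrix (Fin d) (Fin d) ℂ) with hU
  set V : Matrix (Fin d) (Fin d) ℂ := (hB.eigenvectorUnitary : Matrix (Fin d) (Fin d) ℂ) with hV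
  set Df : Matrix (Fin d) (Fin d) ℂ := Matrix.diagonal (fun i => (f (hA.eigenvalues i) : ℂ)) with hDf
  set Eg : Matrix (Fin d) (Fin d) ℂ := Matrix.diagonal (fun i => (g (hB.eigenvalues i) : ℂ)) with hEg
  have hW : ovl hA hB = star U * V := rfl
  have hsW : star (ovl hA hB) = star V * U := by
    rw [hW, StarMul.star_mul, star_star]
  have e1 : matFun hA f * matFun hB g = U * (Df * (star U * (V * (Eg * star V)))) := by
    rw [matFun, matFun, ← hU, ← hV, ← hDf, ← hEg]
    simp only [mul_assoc]
  rw [e1, Matrix.trace_mul_comm]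
  have e2 : Df * (star U * (V * (Eg * star V))) * U =
      Df * (ovl hA hB * Eg * star (ovl hA hB)) := by
    rw [hsW, hW]
    simp only [mul_assoc]
  rw [e2, Matrix.trace]
  have diagentry : ∀ j, (Df * (ovl hA hB * Eg * star (ovl hA hB))).diag j =
      ((∑ k, f (hA.eigenvalues j) * g (hB.eigenvalues k) * ‖ovl hA hB j k‖ ^ 2 : ℝ) : ℂ) := by
    intro j
    rw [Matrix.diag_apply, hDf, Matrix.diagonal_mul, Matrix.mul_apply]
    have : ∀ k, (ovl hA hB * Eg) j k * star (ovl hA hB) k j =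
        g (hB.eigenvalues k) * ((‖ovl hA hB j k‖ ^ 2 : ℝ) : ℂ) := by
      intro k
      rw [hEg, Matrix.mul_diagonal, Matrix.star_apply]
      have : ovl hA hB j k * star (ovl hA hB j k) = ((‖ovl hA hB j k‖ ^ 2 : ℝ) : ℂ) := by
        simp [Complex.star_def, Complex.mul_conj, Complex.normSq_eq_norm_sq]
      rw [mul_comm (ovl hA hB j k) ((g (hB.eigenvalues k) : ℝ) : ℂ), mul_assoc, this]
    rw [Finset.sum_congr rfl (fun k _ => this k), Finset.mul_sum]
    push_cast
    refine Finset.sum_congr rfl (fun k _ => ?_)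
    ring
  rw [Finset.sum_congr rfl (fun j _ => diagentry j)]
  push_cast
  rfl

lemma matFun_posSemidef {d : ℕ} {A : Matrix (Fin d) (Fin d) ℂ} (hA : A.IsHermitian)
    {f : ℝ → ℝ} (hf : ∀ x, 0 ≤ f x) : (matFun hA f).PosSemidef := by
  rw [matFun]
  have hd : (Matrix.diagonal (fun i => (f (hA.eigenvalues i) : ℂ))).PosSemidef := by
    rw [Matrix.posSemidef_diagonal_iff]
    intro i
    exact_mod_cast Complex.zero_le_real.mpr (hf _)
  have h2 := hd.mul_mul_conjTranspose_same (hA.eigenvectorUnitary : Matrix (Fin d) (Fin d) ℂ)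
  rw [← Matrix.star_eq_conjTranspose] at h2
  exact h2

lemma traceNorm_hermitian {d : ℕ} {D : Matrix (Fin d) (Fin d) ℂ} (hD : D.IsHermitian) :
    traceNorm D = ∑ i, |hD.eigenvalues i| := by
  have habs : ∀ x : ℝ, (0:ℝ) ≤ |x| := fun x => abs_nonneg x
  have hsq : (matFun hD (fun x => |x|)) ^ 2 = Dᴴ * D := by
    rw [pow_two, matFun_mul]
    have : (fun x : ℝ => |x| * |x|) = fun x : ℝ => x * x := by
      funext x; exact abs_mul_abs_self x
    rw [this, ← matFun_mul, matFun_id, hD.eq]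
  have key : ∀ {B : Matrix (Fin d) (Fin d) ℂ} (hB : B.IsHermitian) (f : ℝ → ℝ),
      matFun hB f = cfc f B := by
    intro B hB f
    rw [hB.cfc_eq, IsHermitian.cfc, Unitary.conjStarAlgAut_apply]; rfl
  show (matFun (Matrix.posSemidef_conjTranspose_mul_self D).1 Real.sqrt).trace.re = _
  have h2 : D * D = cfc (fun x : ℝ => x * x) D := by
    rw [cfc_mul (R := ℝ) (fun x => x) (fun x => x) D, cfc_id' ℝ D hD.isSelfAdjoint]
  have h3 : Real.sqrt ∘ (fun x : ℝ => x * x) = fun x => |x| := by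
    funext x; exact Real.sqrt_mul_self_eq_abs x
  rw [key, hD.eq, h2, ← cfc_comp Real.sqrt (fun x : ℝ => x * x) D hD.isSelfAdjoint, h3, ← key hD,
    trace_matFun]
  exact Complex.ofReal_re _

/-! ### Real-analysis lemmas -/

lemma psi_nonneg {p : ℝ} (hp1 : p < 1) (hp0 : p ≠ 0) {t : ℝ} (ht0 : 0 < t) (ht1 : t ≤ 1) :
    (1 - t ^ p) / p ≤ t ^ (p - 1) * (1 - t) := by
  set ψ : ℝ → ℝ := fun t => t ^ (p - 1) * (1 - t) - (1 - t ^ p) / p with hψ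
  have hderiv : ∀ x ∈ Set.Ioo (0:ℝ) 1, HasDerivAt ψ ((p - 1) * x ^ (p - 2) * (1 - x)) x := by
    intro x hx
    have hx0 : x ≠ 0 := ne_of_gt hx.1
    have h1 : HasDerivAt (fun t : ℝ => t ^ (p - 1)) ((p - 1) * x ^ (p - 1 - 1)) x :=
      Real.hasDerivAt_rpow_const (Or.inl hx0)
    have h2 : HasDerivAt (fun t : ℝ => t ^ p) (p * x ^ (p - 1)) x :=
      Real.hasDerivAt_rpow_const (Or.inl hx0)
    have h3 : HasDerivAt (fun t : ℝ => 1 - t) (-1) x := by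
      simpa using (hasDerivAt_id x).const_sub 1
    have h4 : HasDerivAt (fun t : ℝ => (1 - t ^ p) / p) ((-(p * x ^ (p - 1))) / p) x :=
      (h2.const_sub 1).div_const p
    have h5 := (h1.mul h3).sub h4
    refine h5.congr_deriv ?_
    field_simp
    ring_nf
  have hanti : AntitoneOn ψ (Set.Ioc (0:ℝ) 1) := by
    have hconv : Convex ℝ (Set.Ioc (0:ℝ) 1) := convex_Ioc 0 1
    have hcont : ContinuousOn ψ (Set.Ioc (0:ℝ) 1) := by
      apply ContinuousOn.sub
      · exact (continuousOn_id.rpow_const (fun x hx => Or.inl (ne_of_gt hx.1))).mul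
          (continuousOn_const.sub continuousOn_id)
      · exact ((continuousOn_const.sub
          (continuousOn_id.rpow_const (fun x hx => Or.inl (ne_of_gt hx.1)))).div_const p)
    apply antitoneOn_of_deriv_nonpos hconv hcont
    · intro x hx
      rw [interior_Ioc] at hx
      exact (hderiv x hx).differentiableAt.differentiableWithinAt
    · intro x hx
      rw [interior_Ioc] at hx
      rw [(hderiv x hx).deriv]
      have h0 : (0:ℝ) ≤ x ^ (p - 2) := Real.rpow_nonneg (le_of_lt hx.1) _
      nlinarith [mul_nonneg h0 (by linarith [hx.2] : (0:ℝ) ≤ 1 - x)]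
  have h1 : ψ 1 = 0 := by simp [hψ, Real.one_rpow]
  have h2 : ψ t ≥ 0 := by
    have := hanti (Set.mem_Ioc.mpr ⟨ht0, ht1⟩) (Set.mem_Ioc.mpr ⟨one_pos, le_refl 1⟩) ht1
    rw [h1] at this
    linarith
  simp only [hψ] at h2
  linarith

lemma G_anti {p : ℝ} (hp1 : p < 1) (hp0 : p ≠ 0) {v u : ℝ} (hv : 0 < v) (hvu : v ≤ u)
    (hu : u < 1) :
    (1 - u ^ p) / p / (1 - u) ≤ (1 - v ^ p) / p / (1 - v) := by
  set G : ℝ → ℝ := fun t => (1 - t ^ p) / p / (1 - t) with hG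
  have hderiv : ∀ x ∈ Set.Ioo (0:ℝ) 1,
      HasDerivAt G ((-(p * x ^ (p - 1)) / p) / (1 - x) + ((1 - x ^ p) / p) * ((1-x)^2)⁻¹) x := by
    intro x hx
    have hx0 : x ≠ 0 := ne_of_gt hx.1
    have hx1 : (1:ℝ) - x ≠ 0 := by
      have := hx.2; intro h; rw [sub_eq_zero] at h; exact absurd h.symm (ne_of_lt this)
    have h2 : HasDerivAt (fun t : ℝ => (1 - t ^ p) / p) ((-(p * x ^ (p - 1))) / p) x :=
      ((Real.hasDerivAt_rpow_const (Or.inl hx0)).const_sub 1).div_const p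
    have h3 : HasDerivAt (fun t : ℝ => (1 - t)) (-1) x := by
      simpa using (hasDerivAt_id x).const_sub 1
    have h4 := h2.div h3 hx1
    refine h4.congr_deriv ?_
    field_simp
    ring
  have hanti : AntitoneOn G (Set.Ioo (0:ℝ) 1) := by
    apply antitoneOn_of_deriv_nonpos (convex_Ioo 0 1)
    · apply ContinuousOn.div
      · exact ((continuousOn_const.sub
          (continuousOn_id.rpow_const (fun x hx => Or.inl (ne_of_gt hx.1)))).div_const p)
      · exact continuousOn_const.sub continuousOn_id
      · intro x hx; intro h; rw [sub_eq_zero] at h; exact absurd h.symm (ne_of_lt hx.2)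
    · intro x hx
      rw [interior_Ioo] at hx
      exact (hderiv x hx).differentiableAt.differentiableWithinAt
    · intro x hx
      rw [interior_Ioo] at hx
      rw [(hderiv x hx).deriv]
      have hψ := psi_nonneg hp1 hp0 hx.1 (le_of_lt hx.2)
      have hx1 : (0:ℝ) < 1 - x := by linarith [hx.2]
      have key : (-(p * x ^ (p - 1)) / p) / (1 - x) + ((1 - x ^ p) / p) * ((1-x)^2)⁻¹
          = ((1 - x ^ p) / p - x ^ (p-1) * (1 - x)) / (1-x)^2 := by
        field_simp
        ring
      rw [key]
      apply div_nonpos_of_nonpos_of_nonneg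
      · linarith
      · positivity
  exact hanti (Set.mem_Ioo.mpr ⟨hv, lt_of_le_of_lt hvu hu⟩)
    (Set.mem_Ioo.mpr ⟨lt_of_lt_of_le hv hvu, hu⟩) hvu

lemma Npos {p w : ℝ} (hp0 : p ≠ 0) (hw0 : 0 < w) (hw1 : w < 1) : 0 ≤ (1 - w ^ p) / p := by
  rcases lt_or_gt_of_ne hp0 with hneg | hpos
  · have : (1:ℝ) = 1 ^ p := (Real.one_rpow p).symm
    have h2 : (1:ℝ) ^ p ≤ w ^ p := Real.rpow_le_rpow_of_nonpos hw0 hw1.le hneg.le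
    have h3 : 1 - w ^ p ≤ 0 := by nlinarith
    exact div_nonneg_of_nonpos h3 hneg.le
  · have h2 : w ^ p ≤ 1 ^ p := Real.rpow_le_rpow hw0.le hw1.le hpos.le
    rw [Real.one_rpow] at h2
    apply div_nonneg _ hpos.le
    linarith

lemma K_eq {p b a : ℝ} (hp0 : p ≠ 0) (ha : 0 < a) (hb : a < b) :
    b ^ (1 - p) * ((b ^ p - a ^ p) / (p * (b - a))) = (1 - (a / b) ^ p) / p / (1 - a / b) := by
  have hb0 : (0:ℝ) < b := lt_trans ha hb
  have hbp : (0:ℝ) < b ^ p := Real.rpow_pos_of_pos hb0 p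
  rw [Real.div_rpow ha.le hb0.le, Real.rpow_sub hb0, Real.rpow_one]
  field_simp

lemma K_nonneg {q lr as : ℝ} (hq1 : q ≠ 1) (ha : 0 < as) (hal : as < lr) :
    0 ≤ lr ^ q * ((lr ^ (1 - q) - as ^ (1 - q)) / ((1 - q) * (lr - as))) := by
  set p : ℝ := 1 - q with hp
  have hp0 : p ≠ 0 := sub_ne_zero.mpr (Ne.symm hq1)
  have hl0 : (0:ℝ) < lr := lt_trans ha hal
  have hq' : q = 1 - p := by rw [hp]; ring
  have hKeq : lr ^ q * ((lr ^ p - as ^ p) / (p * (lr - as)))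
      = (1 - (as / lr) ^ p) / p / (1 - as / lr) := by
    rw [hq']; exact K_eq hp0 ha hal
  rw [hKeq]
  exact div_nonneg (Npos hp0 (div_pos ha hl0) ((div_lt_one hl0).mpr hal))
    (by
      have : as / lr < 1 := (div_lt_one hl0).mpr hal
      linarith)

lemma term_bound {q lr as x y : ℝ} (hq1 : q ≠ 1) (hp1 : 1 - q < 1)
    (hx : 0 < x) (hy : 0 < y) (ha : 0 < as) (hxl : x ≤ lr) (hay : as ≤ y) (hal : as < lr) :
    x ^ q * ((x ^ (1 - q) - y ^ (1 - q)) / (1 - q)) ≤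
      |x - y| * (lr ^ q * ((lr ^ (1 - q) - as ^ (1 - q)) / ((1 - q) * (lr - as)))) := by
  set p : ℝ := 1 - q with hp
  have hp0 : p ≠ 0 := sub_ne_zero.mpr (Ne.symm hq1)
  have hl0 : (0:ℝ) < lr := lt_trans ha hal
  have hq' : q = 1 - p := by rw [hp]; ring
  have hKeq : lr ^ q * ((lr ^ p - as ^ p) / (p * (lr - as)))
      = (1 - (as / lr) ^ p) / p / (1 - as / lr) := by
    rw [hq']; exact K_eq hp0 ha hal
  have hvK0 : 0 < as / lr := div_pos ha hl0
  have hvK1 : as / lr < 1 := (div_lt_one hl0).mpr hal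
  have hKnn : 0 ≤ lr ^ q * ((lr ^ p - as ^ p) / (p * (lr - as))) := by
    rw [hKeq]
    exact div_nonneg (Npos hp0 hvK0 hvK1) (by linarith)
  rcases le_or_gt x y with hxy | hyx
  · have hLHS : x ^ q * ((x ^ p - y ^ p) / p) ≤ 0 := by
      apply mul_nonpos_of_nonneg_of_nonpos (Real.rpow_pos_of_pos hx q).le
      rcases lt_or_gt_of_ne hp0 with hneg | hpos
      · have h2 : y ^ p ≤ x ^ p := Real.rpow_le_rpow_of_nonpos hx hxy hneg.le
        exact div_nonpos_of_nonneg_of_nonpos (by linarith) hneg.le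
      · have h2 : x ^ p ≤ y ^ p := Real.rpow_le_rpow hx.le hxy hpos.le
        exact div_nonpos_of_nonpos_of_nonneg (by linarith) hpos.le
    calc x ^ q * ((x ^ p - y ^ p) / p) ≤ 0 := hLHS
      _ ≤ _ := mul_nonneg (abs_nonneg _) hKnn
  · have hxy0 : (0:ℝ) < x - y := by linarith
    have habs : |x - y| = x - y := abs_of_pos hxy0
    have hxeq : x ^ q * ((x ^ p - y ^ p) / (p * (x - y)))
        = (1 - (y / x) ^ p) / p / (1 - y / x) := by
      rw [hq']; exact K_eq hp0 hy hyx
    have hu0 : 0 < y / x := div_pos hy hx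
    have hu1 : y / x < 1 := (div_lt_one hx).mpr hyx
    have hvu : as / lr ≤ y / x := by
      rw [div_le_div_iff₀ hl0 hx]
      nlinarith
    have hG := G_anti hp1 hp0 hvK0 hvu hu1
    have key : x ^ q * ((x ^ p - y ^ p) / p)
        = (x - y) * (x ^ q * ((x ^ p - y ^ p) / (p * (x - y)))) := by
      field_simp
    rw [habs, key, hxeq, hKeq]
    exact mul_le_mul_of_nonneg_left hG hxy0.le

lemma K_le {q lr as : ℝ} (hq0 : 0 < q) (hq1 : q ≠ 1) (ha : 0 < as) (hal : as < lr) :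
    lr ^ q * ((lr ^ (1 - q) - as ^ (1 - q)) / ((1 - q) * (lr - as))) ≤ lr ^ q / as ^ q := by
  set p : ℝ := 1 - q with hp
  have hp0 : p ≠ 0 := sub_ne_zero.mpr (Ne.symm hq1)
  have hl0 : (0:ℝ) < lr := lt_trans ha hal
  have hw0 : 0 < as / lr := div_pos ha hl0
  have hw1 : as / lr < 1 := (div_lt_one hl0).mpr hal
  have hq' : q = 1 - p := by rw [hp]; ring
  have hKeq : lr ^ q * ((lr ^ p - as ^ p) / (p * (lr - as)))
      = (1 - (as / lr) ^ p) / p / (1 - as / lr) := by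
    rw [hq']; exact K_eq hp0 ha hal
  have hψ := psi_nonneg (by rw [hp]; linarith) hp0 hw0 hw1.le
  have hGw : (1 - (as / lr) ^ p) / p / (1 - as / lr) ≤ (as / lr) ^ (p - 1) := by
    rw [div_le_iff₀ (by linarith : (0:ℝ) < 1 - as / lr)]
    calc (1 - (as / lr) ^ p) / p ≤ (as / lr) ^ (p - 1) * (1 - as / lr) := hψ
      _ = _ := rfl
  have hrw : (as / lr) ^ (p - 1) = lr ^ q / as ^ q := by
    have h1 : p - 1 = -q := by rw [hp]; ring
    rw [h1, Real.rpow_neg (le_of_lt hw0), Real.div_rpow ha.le hl0.le, inv_div,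
      ← Real.div_rpow hl0.le ha.le]
  rw [hKeq, ← hrw]
  exact hGw

lemma comb_ineq {l0 l1 m0 m1 c00 c01 c10 c11 : ℝ}
    (hl : l0 + l1 = 1) (hm : m0 + m1 = 1)
    (hc00 : 0 ≤ c00) (hc01 : 0 ≤ c01) (hc10 : 0 ≤ c10) (hc11 : 0 ≤ c11)
    (hr0 : c00 + c01 = 1) (hr1 : c10 + c11 = 1) (hcol0 : c00 + c10 = 1) :
    (c00 * |l0 - m0| + c01 * |l0 - m1| + c10 * |l1 - m0| + c11 * |l1 - m1|) ^ 2 ≤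
      2 * ((l0 ^ 2 + l1 ^ 2) + (m0 ^ 2 + m1 ^ 2) -
        2 * (c00 * (l0 * m0) + c01 * (l0 * m1) + c10 * (l1 * m0) + c11 * (l1 * m1))) := by
  set A := |l0 - m0| with hA
  set B := |l0 - m1| with hB
  have hA0 : 0 ≤ A := abs_nonneg _
  have hB0 : 0 ≤ B := abs_nonneg _
  have hA2 : A ^ 2 = (l0 - m0) ^ 2 := sq_abs _
  have hB2 : B ^ 2 = (l0 - m1) ^ 2 := sq_abs _
  have e1 : |l1 - m1| = A := by rw [hA]; rw [show l1 - m1 = -(l0 - m0) by linarith, abs_neg]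
  have e2 : |l1 - m0| = B := by rw [hB]; rw [show l1 - m0 = -(l0 - m1) by linarith, abs_neg]
  rw [e1, e2]
  have hc : c11 = c00 := by linarith
  have hc' : c10 = c01 := by linarith
  rw [hc, hc']
  have hl1 : l1 = 1 - l0 := by linarith
  have hm1 : m1 = 1 - m0 := by linarith
  have hc01 : c01 = 1 - c00 := by linarith
  subst hl1 hm1 hc01
  have h1 : c00 * A ^ 2 = c00 * (l0 - m0) ^ 2 := by rw [hA2]
  have h2 : (1 - c00) * B ^ 2 = (1 - c00) * (l0 - (1 - m0)) ^ 2 := by rw [hB2]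
  nlinarith [mul_nonneg (mul_nonneg hc00 hc01) (sq_nonneg (A - B)), h1, h2]

set_option maxHeartbeats 2000000 in
/-- upper bound on the Tsallis relative q-entropy for qubits, `q ∈ (0,2)`,
`q ≠ 1`. -/
theorem tsallisEntropy_le_of_qubits (q : ℝ) (hq : q ∈ Set.Ioo (0 : ℝ) 2) (hq1 : q ≠ 1)
    (ρ σ : Matrix (Fin 2) (Fin 2) ℂ) (hρ : ρ.PosDef) (hσ : σ.PosDef)
    (hρtr : ρ.trace = 1) (hσtr : σ.trace = 1)
    (lρ aσ : ℝ)
    (hl : IsGreatest (Set.range hρ.1.eigenvalues) lρ)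
    (haσ : IsLeast (Set.range hσ.1.eigenvalues) aσ)
    (hlt : aσ < lρ) :
    tsallisEntropy q hρ.1 hσ.1 ≤
        (1 / (1 - q)) * traceNorm (ρ - σ) * lρ ^ q *
          ((lρ ^ (1 - q) - aσ ^ (1 - q)) / (lρ - aσ)) ∧
      (1 / (1 - q)) * traceNorm (ρ - σ) * lρ ^ q *
          ((lρ ^ (1 - q) - aσ ^ (1 - q)) / (lρ - aσ)) ≤
        traceNorm (ρ - σ) * lρ ^ q / aσ ^ q := by
  obtain ⟨hq0, hq2⟩ := hq
  have hp0 : (1 - q) ≠ 0 := sub_ne_zero.mpr (Ne.symm hq1)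
  set a : Fin 2 → ℝ := hρ.1.eigenvalues with ha_def
  set b : Fin 2 → ℝ := hσ.1.eigenvalues with hb_def
  set c : Fin 2 → Fin 2 → ℝ := fun j k => ‖ovl hρ.1 hσ.1 j k‖ ^ 2 with hc_def
  have hapos : ∀ j, 0 < a j := fun j => hρ.eigenvalues_pos j
  have hbpos : ∀ k, 0 < b k := fun k => hσ.eigenvalues_pos k
  have hcpos : ∀ j k, 0 ≤ c j k := fun j k => by positivity
  have hal : ∀ j, a j ≤ lρ := fun j => hl.2 (Set.mem_range_self j)
  have hab : ∀ k, aσ ≤ b k := fun k => haσ.2 (Set.mem_range_self k)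
  have haσ0 : 0 < aσ := by
    obtain ⟨k, hk⟩ := haσ.1
    rw [← hk]; exact hbpos k
  have hlρ0 : 0 < lρ := lt_trans haσ0 hlt
  -- eigenvalue sums
  have htr_a : (∑ j, a j) = 1 := by
    have h := trace_matFun hρ.1 (fun x => x)
    rw [matFun_id, hρtr] at h
    exact_mod_cast h.symm
  have htr_b : (∑ k, b k) = 1 := by
    have h := trace_matFun hσ.1 (fun x => x)
    rw [matFun_id, hσtr] at h
    exact_mod_cast h.symm
  -- Tsallis entropy as a double sum
  have htsallis : tsallisEntropy q hρ.1 hσ.1 =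
      (1 / (1 - q)) * (1 - ∑ j, ∑ k, a j ^ q * b k ^ (1 - q) * c j k) := by
    rw [tsallisEntropy, trace_matFun_mul hρ.1 hσ.1 (fun x => x ^ q) (fun x => x ^ (1 - q)),
      Complex.ofReal_re]
  have hone : (1:ℝ) = ∑ j, ∑ k, a j * c j k := by
    rw [← htr_a]
    refine Finset.sum_congr rfl fun j _ => ?_
    rw [← Finset.mul_sum, ovl_row_sum hρ.1 hσ.1 j, mul_one]
  have hts2 : tsallisEntropy q hρ.1 hσ.1 =
      ∑ j, ∑ k, c j k * (a j ^ q * ((a j ^ (1 - q) - b k ^ (1 - q)) / (1 - q))) := by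
    have h1 := congrArg
      (fun t : ℝ => (1 / (1 - q)) * (t - ∑ j, ∑ k, a j ^ q * b k ^ (1 - q) * c j k)) hone
    rw [htsallis, h1, ← Finset.sum_sub_distrib, Finset.mul_sum]
    refine Finset.sum_congr rfl fun j _ => ?_
    rw [← Finset.sum_sub_distrib, Finset.mul_sum]
    refine Finset.sum_congr rfl fun k _ => ?_
    have haj : a j ^ q * a j ^ (1 - q) = a j := by
      rw [← Real.rpow_add (hapos j)]
      norm_num
    have hstep : c j k * (a j ^ q * ((a j ^ (1 - q) - b k ^ (1 - q)) / (1 - q))) =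
        (1 / (1 - q)) * ((a j ^ q * a j ^ (1 - q)) * c j k - a j ^ q * b k ^ (1 - q) * c j k) := by
      field_simp
    rw [hstep, haj]
  -- term-wise bound
  set K : ℝ := lρ ^ q * ((lρ ^ (1 - q) - aσ ^ (1 - q)) / ((1 - q) * (lρ - aσ))) with hK_def
  have hKnn : 0 ≤ K := K_nonneg hq1 haσ0 hlt
  have hbound : tsallisEntropy q hρ.1 hσ.1 ≤ (∑ j, ∑ k, c j k * |a j - b k|) * K := by
    rw [hts2]
    have h1 : ∀ j k, c j k * (a j ^ q * ((a j ^ (1 - q) - b k ^ (1 - q)) / (1 - q))) ≤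
        (c j k * |a j - b k|) * K := by
      intro j k
      rw [mul_assoc]
      exact mul_le_mul_of_nonneg_left
        (term_bound hq1 (by linarith) (hapos j) (hbpos k) haσ0 (hal j) (hab k) hlt)
        (hcpos j k)
    calc ∑ j, ∑ k, c j k * (a j ^ q * ((a j ^ (1 - q) - b k ^ (1 - q)) / (1 - q)))
        ≤ ∑ j, ∑ k, (c j k * |a j - b k|) * K := by
          refine Finset.sum_le_sum fun j _ => Finset.sum_le_sum fun k _ => h1 j k
      _ = (∑ j, ∑ k, c j k * |a j - b k|) * K := by
          rw [Finset.sum_mul]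
          refine Finset.sum_congr rfl fun j _ => ?_
          rw [Finset.sum_mul]
  -- trace norm facts
  have hD : (ρ - σ).IsHermitian := hρ.1.sub hσ.1
  set dd : Fin 2 → ℝ := hD.eigenvalues with hd_def
  have hT : traceNorm (ρ - σ) = |dd 0| + |dd 1| := by
    rw [traceNorm_hermitian hD, Fin.sum_univ_two]
  have hT0 : 0 ≤ traceNorm (ρ - σ) := by rw [hT]; positivity
  have hdsum : dd 0 + dd 1 = 0 := by
    have h := trace_matFun hD (fun x => x)
    rw [matFun_id] at h
    rw [Matrix.trace_sub, hρtr, hσtr, sub_self] at h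
    have : (∑ i, dd i) = 0 := by exact_mod_cast h.symm
    rwa [Fin.sum_univ_two] at this
  -- trace of squares
  have htrρρ : ((ρ * ρ).trace) = ((∑ j, a j * a j : ℝ) : ℂ) := by
    rw [← matFun_id hρ.1, matFun_mul, trace_matFun]
  have htrσσ : ((σ * σ).trace) = ((∑ k, b k * b k : ℝ) : ℂ) := by
    rw [← matFun_id hσ.1, matFun_mul, trace_matFun]
  have htrρσ : ((ρ * σ).trace) = ((∑ j, ∑ k, a j * b k * c j k : ℝ) : ℂ) := by
    rw [← matFun_id hρ.1, ← matFun_id hσ.1, trace_matFun_mul]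
  have htrDD : (((ρ - σ) * (ρ - σ)).trace) = ((∑ i, dd i * dd i : ℝ) : ℂ) := by
    rw [← matFun_id hD, matFun_mul, trace_matFun]
  have hexp : ((ρ - σ) * (ρ - σ)).trace =
      (ρ * ρ).trace - (ρ * σ).trace - (σ * ρ).trace + (σ * σ).trace := by
    rw [sub_mul, mul_sub, mul_sub, Matrix.trace_sub, Matrix.trace_sub, Matrix.trace_sub]
    ring
  have hcomm : (σ * ρ).trace = (ρ * σ).trace := Matrix.trace_mul_comm σ ρ
  have hEreal : (∑ i, dd i * dd i) =
      (∑ j, a j * a j) + (∑ k, b k * b k) - 2 * (∑ j, ∑ k, a j * b k * c j k) := by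
    have h := hexp
    rw [hcomm, htrρρ, htrσσ, htrρσ, htrDD] at h
    have h2 : (∑ i, dd i * dd i) = (∑ j, a j * a j) - (∑ j, ∑ k, a j * b k * c j k)
        - (∑ j, ∑ k, a j * b k * c j k) + (∑ k, b k * b k) := by exact_mod_cast h
    linarith
  -- S ≤ T
  set S : ℝ := ∑ j, ∑ k, c j k * |a j - b k| with hS_def
  have hS0 : 0 ≤ S := by
    rw [hS_def]
    refine Finset.sum_nonneg fun j _ => Finset.sum_nonneg fun k _ => ?_
    exact mul_nonneg (hcpos j k) (abs_nonneg _)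
  have hST : S ≤ traceNorm (ρ - σ) := by
    have hrow0 := ovl_row_sum hρ.1 hσ.1 0
    have hrow1 := ovl_row_sum hρ.1 hσ.1 1
    have hcol0 := ovl_col_sum hρ.1 hσ.1 0
    rw [Fin.sum_univ_two] at hrow0 hrow1 hcol0
    have hla : a 0 + a 1 = 1 := by rw [← htr_a, Fin.sum_univ_two]
    have hlb : b 0 + b 1 = 1 := by rw [← htr_b, Fin.sum_univ_two]
    have hcomb := comb_ineq hla hlb (hcpos 0 0) (hcpos 0 1) (hcpos 1 0) (hcpos 1 1)
      hrow0 hrow1 hcol0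
    have hSval : S = c 0 0 * |a 0 - b 0| + c 0 1 * |a 0 - b 1| +
        c 1 0 * |a 1 - b 0| + c 1 1 * |a 1 - b 1| := by
      rw [hS_def, Fin.sum_univ_two, Fin.sum_univ_two, Fin.sum_univ_two]
      ring
    have hE2 : dd 0 * dd 0 + dd 1 * dd 1 =
        (a 0 * a 0 + a 1 * a 1) + (b 0 * b 0 + b 1 * b 1) -
          2 * (a 0 * b 0 * c 0 0 + a 0 * b 1 * c 0 1 + a 1 * b 0 * c 1 0 + a 1 * b 1 * c 1 1) := by
      have h := hEreal
      simp only [Fin.sum_univ_two] at h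
      linarith only [h]
    have hTsq : (traceNorm (ρ - σ)) ^ 2 = 2 * (dd 0 * dd 0 + dd 1 * dd 1) := by
      rw [hT]
      have hd1 : dd 1 = -dd 0 := by linarith only [hdsum]
      rw [hd1, abs_neg]
      have h5 : |dd 0| ^ 2 = dd 0 ^ 2 := sq_abs _
      linear_combination (4:ℝ) * h5
    have e3 : S ^ 2 ≤ 2 * ((a 0 ^ 2 + a 1 ^ 2) + (b 0 ^ 2 + b 1 ^ 2) -
        2 * (c 0 0 * (a 0 * b 0) + c 0 1 * (a 0 * b 1) + c 1 0 * (a 1 * b 0) +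
          c 1 1 * (a 1 * b 1))) := by
      rw [hSval]; exact hcomb
    have e4 : 2 * ((a 0 ^ 2 + a 1 ^ 2) + (b 0 ^ 2 + b 1 ^ 2) -
        2 * (c 0 0 * (a 0 * b 0) + c 0 1 * (a 0 * b 1) + c 1 0 * (a 1 * b 0) +
          c 1 1 * (a 1 * b 1))) = 2 * (dd 0 * dd 0 + dd 1 * dd 1) := by
      linear_combination (-2 : ℝ) * hE2
    have hS2T2 : S ^ 2 ≤ (traceNorm (ρ - σ)) ^ 2 := by
      rw [hTsq]
      exact e3.trans_eq e4
    calc S = Real.sqrt (S ^ 2) := (Real.sqrt_sq hS0).symm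
      _ ≤ Real.sqrt ((traceNorm (ρ - σ)) ^ 2) := Real.sqrt_le_sqrt hS2T2
      _ = traceNorm (ρ - σ) := Real.sqrt_sq hT0
  -- final assembly
  constructor
  · have hRHS : (1 / (1 - q)) * traceNorm (ρ - σ) * lρ ^ q *
        ((lρ ^ (1 - q) - aσ ^ (1 - q)) / (lρ - aσ)) = traceNorm (ρ - σ) * K := by
      rw [hK_def]
      have hne : lρ - aσ ≠ 0 := ne_of_gt (by linarith)
      field_simp
    rw [hRHS]
    calc tsallisEntropy q hρ.1 hσ.1 ≤ S * K := hbound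
      _ ≤ traceNorm (ρ - σ) * K := mul_le_mul_of_nonneg_right hST hKnn
  · have hRHS : (1 / (1 - q)) * traceNorm (ρ - σ) * lρ ^ q *
        ((lρ ^ (1 - q) - aσ ^ (1 - q)) / (lρ - aσ)) = traceNorm (ρ - σ) * K := by
      rw [hK_def]
      have hne : lρ - aσ ≠ 0 := ne_of_gt (by linarith)
      field_simp
    rw [hRHS]
    have h2 : traceNorm (ρ - σ) * K ≤ traceNorm (ρ - σ) * (lρ ^ q / aσ ^ q) :=
      mul_le_mul_of_nonneg_left (K_le hq0 hq1 haσ0 hlt) hT0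
    calc traceNorm (ρ - σ) * K ≤ traceNorm (ρ - σ) * (lρ ^ q / aσ ^ q) := h2
      _ = traceNorm (ρ - σ) * lρ ^ q / aσ ^ q := by ring
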